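/- Let p : Ω → Λ be a covering of k-graphs, x a vertex of Λ, and v a vertex of Ω with p(v) = x, and let 𝒢(Λ) act on Ω⁰ by the corresponding action. Then the induced functor p_* restricts to a group isomorphism from the fundamental group π(Ω,v) onto the stability group S_v = {a ∈ π(Λ,x) : av = v} of the action; in particular p_* is injective on π(Ω,v) and its image equals S_v. -/

import Mathlib

/-!
Arrows-only formalization of `k`-graphs (higher-rank graphs), their coverings,
fundamental groupoids, and groupoid actions, following Pask–Quigg–Raeburn,
"Coverings of k-graphs".

A small category is encoded by its set of arrows `A` together with
source/range maps `src rng : A → A` (whose common image is the set of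
identities = vertices) and a (guarded) total composition `comp : A → A → A`,
where `comp f g` is the composite "f after g", meaningful when `src f = rng g`.
A `k`-graph additionally has a degree map `deg : A → (Fin k → ℕ)` which is
functorial and satisfies the unique factorization property.
-/

namespace KGraphCovering

/-- A `k`-graph in arrows-only form. -/
structure KGraphStruct (k : ℕ) (A : Type) : Type where
  src : A → A
  rng : A → A
  comp : A → A → A
  deg : A → (Fin k → ℕ)
  src_src : ∀ f, src (src f) = src f
  rng_src : ∀ f, rng (src f) = src f
  src_rng : ∀ f, src (rng f) = rng f
  rng_rng : ∀ f, rng (rng f) = rng f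
  comp_src_id : ∀ f, comp f (src f) = f
  rng_comp_id : ∀ f, comp (rng f) f = f
  src_comp : ∀ f g, src f = rng g → src (comp f g) = src g
  rng_comp : ∀ f g, src f = rng g → rng (comp f g) = rng f
  assoc : ∀ f g h, src f = rng g → src g = rng h →
    comp (comp f g) h = comp f (comp g h)
  deg_comp : ∀ f g, src f = rng g → deg (comp f g) = deg f + deg g
  deg_src : ∀ f, deg (src f) = 0
  factor : ∀ f m n, deg f = m + n →
    ∃! q : A × A, src q.1 = rng q.2 ∧ deg q.1 = m ∧ deg q.2 = n ∧ comp q.1 q.2 = f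

namespace KGraphStruct

variable {k : ℕ} {A : Type}

/-- The vertices (objects) are the identity arrows. -/
def IsVertex (S : KGraphStruct k A) (v : A) : Prop := S.src v = v

/-- A `k`-graph is connected if the equivalence relation generated by
"there is a morphism from `v` to `u`" relates all pairs of vertices. -/
def Connected (S : KGraphStruct k A) : Prop :=
  ∀ u v, S.IsVertex u → S.IsVertex v →
    Relation.EqvGen (fun a b => ∃ f, S.rng f = a ∧ S.src f = b) u v

end KGraphStruct

/-- A groupoid in arrows-only form. -/
structure GroupoidStruct (B : Type) : Type where
  src : B → B
  rng : B → B
  comp : B → B → B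
  inv : B → B
  src_src : ∀ f, src (src f) = src f
  rng_src : ∀ f, rng (src f) = src f
  src_rng : ∀ f, src (rng f) = rng f
  rng_rng : ∀ f, rng (rng f) = rng f
  comp_src_id : ∀ f, comp f (src f) = f
  rng_comp_id : ∀ f, comp (rng f) f = f
  src_comp : ∀ f g, src f = rng g → src (comp f g) = src g
  rng_comp : ∀ f g, src f = rng g → rng (comp f g) = rng f
  assoc : ∀ f g h, src f = rng g → src g = rng h →
    comp (comp f g) h = comp f (comp g h)
  src_inv : ∀ f, src (inv f) = rng f
  rng_inv : ∀ f, rng (inv f) = src f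
  inv_comp_self : ∀ f, comp (inv f) f = src f
  comp_inv_self : ∀ f, comp f (inv f) = rng f

namespace GroupoidStruct

variable {B : Type}

/-- The vertices (objects) of a groupoid are the identity arrows. -/
def IsVertex (G : GroupoidStruct B) (v : B) : Prop := G.src v = v

/-- A subgroup of the isotropy group `x𝒢x`, as a set of arrows. -/
def IsSubgroupAt (G : GroupoidStruct B) (x : B) (H : Set B) : Prop :=
  (∀ a ∈ H, G.src a = x ∧ G.rng a = x) ∧ x ∈ H ∧
  (∀ a ∈ H, ∀ b ∈ H, G.comp a b ∈ H) ∧ (∀ a ∈ H, G.inv a ∈ H)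

/-- `K` is a conjugate of `H` in the isotropy group at `x`. -/
def ConjAt (G : GroupoidStruct B) (x : B) (H K : Set B) : Prop :=
  ∃ g, G.src g = x ∧ G.rng g = x ∧
    K = (fun a => G.comp (G.comp g a) (G.inv g)) '' H

/-- `H` is a normal subset of the isotropy group at `x`. -/
def IsNormalAt (G : GroupoidStruct B) (x : B) (H : Set B) : Prop :=
  ∀ g, G.src g = x → G.rng g = x → ∀ a ∈ H, G.comp (G.comp g a) (G.inv g) ∈ H

/-- The normalizer of `H` in the isotropy group at `x`. -/
def normalizerAt (G : GroupoidStruct B) (x : B) (H : Set B) : Set B :=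
  {g | G.src g = x ∧ G.rng g = x ∧
    (fun a => G.comp (G.comp g a) (G.inv g)) '' H = H}

end GroupoidStruct

/-- `f` is a morphism of `k`-graphs (a degree-preserving functor). -/
def IsKGraphHomFun {k : ℕ} {A A' : Type} (S : KGraphStruct k A)
    (T : KGraphStruct k A') (f : A → A') : Prop :=
  (∀ a, f (S.src a) = T.src (f a)) ∧
  (∀ a, f (S.rng a) = T.rng (f a)) ∧
  (∀ a b, S.src a = S.rng b → f (S.comp a b) = T.comp (f a) (f b)) ∧
  (∀ a, T.deg (f a) = S.deg a)

/-- `f` is a functor from a `k`-graph to a groupoid. -/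
def IsFunctorToGpdFun {k : ℕ} {A B : Type} (S : KGraphStruct k A)
    (G : GroupoidStruct B) (f : A → B) : Prop :=
  (∀ a, f (S.src a) = G.src (f a)) ∧
  (∀ a, f (S.rng a) = G.rng (f a)) ∧
  (∀ a b, S.src a = S.rng b → f (S.comp a b) = G.comp (f a) (f b))

/-- `f` is a morphism of groupoids (a functor). -/
def IsGpdHomFun {B C : Type} (G : GroupoidStruct B) (H : GroupoidStruct C)
    (f : B → C) : Prop :=
  (∀ a, f (G.src a) = H.src (f a)) ∧
  (∀ a, f (G.rng a) = H.rng (f a)) ∧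
  (∀ a b, G.src a = G.rng b → f (G.comp a b) = H.comp (f a) (f b))

/-- `p : Ω → Λ` is a covering of `k`-graphs: a surjective `k`-graph morphism
which maps `Ωv` bijectively onto `Λp(v)` and `vΩ` bijectively onto `p(v)Λ`
for every vertex `v` of `Ω`. -/
structure IsCovering {k : ℕ} {A A' : Type} (S : KGraphStruct k A')
    (T : KGraphStruct k A) (p : A' → A) : Prop where
  hom : IsKGraphHomFun S T p
  surj : Function.Surjective p
  src_inj : ∀ a b, S.src a = S.src b → p a = p b → a = b
  src_lift : ∀ v, S.IsVertex v → ∀ g, T.src g = p v → ∃ a, S.src a = v ∧ p a = g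
  rng_inj : ∀ a b, S.rng a = S.rng b → p a = p b → a = b
  rng_lift : ∀ v, S.IsVertex v → ∀ g, T.rng g = p v → ∃ a, S.rng a = v ∧ p a = g

/-- A fundamental groupoid of a `k`-graph `S`: a groupoid `G` whose object
set is identified with the vertex set of `S` via the canonical functor `i`
(which is bijective on objects), with the universal property that every
functor from `S` to a groupoid factors uniquely through `i`. -/
structure FundamentalGroupoid {k : ℕ} {A : Type} (S : KGraphStruct k A) :
    Type 1 where
  B : Type
  G : GroupoidStruct B
  i : A → B
  i_hom : IsFunctorToGpdFun S G i
  obj_bij : ∀ w, G.IsVertex w → ∃! v, S.IsVertex v ∧ i v = w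
  univ : ∀ {C : Type} (H : GroupoidStruct C) (F : A → C),
    IsFunctorToGpdFun S H F →
    ∃! F' : B → C, IsGpdHomFun G H F' ∧ ∀ a, F' (i a) = F a

/-- The fundamental group `π(Λ,x)` at a vertex `x`, as the isotropy of the
fundamental groupoid at `i x`. -/
def FundamentalGroupoid.pi1 {k : ℕ} {A : Type} {S : KGraphStruct k A}
    (F : FundamentalGroupoid S) (x : A) : Set F.B :=
  {a | F.G.src a = F.i x ∧ F.G.rng a = F.i x}

/-- An automorphism of the covering `p : Ω → Λ`. -/
def IsCoveringAut {k : ℕ} {A A' : Type} (Ω : KGraphStruct k A')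
    (Λ : KGraphStruct k A) (p : A' → A) (φ : A' → A') : Prop :=
  Function.Bijective φ ∧ IsKGraphHomFun Ω Ω φ ∧ ∀ a, p (φ a) = p a

/-- The action of the fundamental groupoid `F = 𝒢(Λ)` on the vertex set of a
covering `p : Ω → Λ`, determined by `i(p(λ)) ⬝ s(λ) = r(λ)`.  The fiber of a
vertex `w` of `Ω` is over the object `F.i (p w)`. -/
structure CorrespondingAction {k : ℕ} {A A' : Type} (Ω : KGraphStruct k A')
    (Λ : KGraphStruct k A) (F : FundamentalGroupoid Λ) (p : A' → A)
    (act : F.B → A' → A') : Prop where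
  act_vertex : ∀ a w, Ω.IsVertex w → F.G.src a = F.i (p w) →
    Ω.IsVertex (act a w) ∧ F.i (p (act a w)) = F.G.rng a
  act_id : ∀ w, Ω.IsVertex w → act (F.i (p w)) w = w
  act_comp : ∀ a b w, Ω.IsVertex w → F.G.src b = F.i (p w) →
    F.G.src a = F.G.rng b → act (F.G.comp a b) w = act a (act b w)
  act_cov : ∀ lam, act (F.i (p lam)) (Ω.src lam) = Ω.rng lam

/-- An action of a groupoid `G` on a set `V`, presented by an anchor map
`fib : V → B` (landing in vertices) and a guarded action map. -/
structure GpdActionStruct {B : Type} (G : GroupoidStruct B) (V : Type) :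
    Type where
  fib : V → B
  act : B → V → V
  fib_vertex : ∀ v, G.src (fib v) = fib v
  act_fib : ∀ a v, G.src a = fib v → fib (act a v) = G.rng a
  act_id : ∀ v, act (fib v) v = v
  act_comp : ∀ a b v, G.src b = fib v → G.src a = G.rng b →
    act (G.comp a b) v = act a (act b v)

namespace GpdActionStruct

variable {B V W : Type} {G : GroupoidStruct B}

/-- Transitivity of a groupoid action. -/
def Transitive (ρ : GpdActionStruct G V) : Prop :=
  ∀ u v : V, ∃ a, G.src a = ρ.fib v ∧ ρ.act a v = u

/-- The stability group of the action at `v`. -/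
def stab (ρ : GpdActionStruct G V) (v : V) : Set B :=
  {a | G.src a = ρ.fib v ∧ G.rng a = ρ.fib v ∧ ρ.act a v = v}

/-- Freeness of a groupoid action: all stability groups are trivial. -/
def Free (ρ : GpdActionStruct G V) : Prop :=
  ∀ (v : V) (a : B), a ∈ ρ.stab v → a = ρ.fib v

end GpdActionStruct

/-- A morphism of actions of the groupoid `G`: a fiber-preserving
equivariant map. -/
def IsActionHom {B V W : Type} {G : GroupoidStruct B}
    (ρ : GpdActionStruct G V) (σ : GpdActionStruct G W) (φ : V → W) : Prop :=
  (∀ v, σ.fib (φ v) = ρ.fib v) ∧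
  ∀ a v, G.src a = ρ.fib v → φ (ρ.act a v) = σ.act a (φ v)

/-- An automorphism of an action of the groupoid `G`. -/
def IsActionAut {B V : Type} {G : GroupoidStruct B}
    (ρ : GpdActionStruct G V) (φ : V → V) : Prop :=
  Function.Bijective φ ∧ IsActionHom ρ ρ φ

/-- A universal covering: a connected covering admitting a morphism of
coverings to every connected covering of the base. -/
def IsUniversalCovering {k : ℕ} {A A' : Type} (Ω : KGraphStruct k A')
    (Λ : KGraphStruct k A) (p : A' → A) : Prop :=
  IsCovering Ω Λ p ∧ Ω.Connected ∧
  ∀ (A'' : Type) (Sg : KGraphStruct k A'') (q : A'' → A),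
    IsCovering Sg Λ q → Sg.Connected →
    ∃ φ : A' → A'', IsKGraphHomFun Ω Sg φ ∧ ∀ a, q (φ a) = p a

end KGraphCovering

namespace KGraphCovering


section Basic
variable {B C D : Type} {G : GroupoidStruct B} {H : GroupoidStruct C} {K : GroupoidStruct D}

lemma gpdhom_comp {f : B → C} {g : C → D} (hf : IsGpdHomFun G H f)
    (hg : IsGpdHomFun H K g) : IsGpdHomFun G K (fun a => g (f a)) := by
  refine ⟨fun a => ?_, fun a => ?_, fun a b hab => ?_⟩
  · show g (f (G.src a)) = K.src (g (f a))
    rw [hf.1, hg.1]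
  · show g (f (G.rng a)) = K.rng (g (f a))
    rw [hf.2.1, hg.2.1]
  · show g (f (G.comp a b)) = K.comp (g (f a)) (g (f b))
    rw [hf.2.2 a b hab, hg.2.2 _ _ (by rw [← hf.1, ← hf.2.1, hab])]

lemma gpdhom_id : IsGpdHomFun G G (fun a => a) :=
  ⟨fun _ => rfl, fun _ => rfl, fun _ _ _ => rfl⟩

lemma gpdhom_inv {f : B → C} (hf : IsGpdHomFun G H f) (a : B) :
    f (G.inv a) = H.inv (f a) := by
  have hsrc : H.src (f (G.inv a)) = H.rng (f a) := by
    rw [← hf.1, G.src_inv, hf.2.1]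
  have h1 : H.comp (f (G.inv a)) (f a) = H.src (f a) := by
    rw [← hf.2.2 _ _ (G.src_inv a), G.inv_comp_self, hf.1]
  calc f (G.inv a) = H.comp (f (G.inv a)) (H.src (f (G.inv a))) :=
        (H.comp_src_id _).symm
    _ = H.comp (f (G.inv a)) (H.comp (f a) (H.inv (f a))) := by
        rw [hsrc, H.comp_inv_self]
    _ = H.comp (H.comp (f (G.inv a)) (f a)) (H.inv (f a)) := by
        rw [H.assoc _ _ _ hsrc (H.rng_inv (f a)).symm]
    _ = H.comp (H.rng (H.inv (f a))) (H.inv (f a)) := by rw [h1, H.rng_inv]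
    _ = H.inv (f a) := H.rng_comp_id _

end Basic

attribute [local instance] Classical.propDecidable

section FG
variable {k : ℕ} {A : Type} {S : KGraphStruct k A} (F : FundamentalGroupoid S)

lemma i_vertex {v : A} (hv : S.IsVertex v) : F.G.IsVertex (F.i v) := by
  have := F.i_hom.1 v
  rw [hv] at this
  exact this.symm

lemma i_inj {v v' : A} (hv : S.IsVertex v) (hv' : S.IsVertex v')
    (h : F.i v = F.i v') : v = v' := by
  obtain ⟨w, -, hw⟩ := F.obj_bij (F.i v) (i_vertex F hv)
  exact (hw v ⟨hv, rfl⟩).trans (hw v' ⟨hv', h.symm⟩).symm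

inductive Gen : F.B → Prop
  | base (α : A) : Gen (F.i α)
  | comp {a b : F.B} (h : F.G.src a = F.G.rng b) (ha : Gen a) (hb : Gen b) :
      Gen (F.G.comp a b)
  | inv {a : F.B} (ha : Gen a) : Gen (F.G.inv a)

lemma Gen.src {a : F.B} (ha : Gen F a) : Gen F (F.G.src a) := by
  rw [← F.G.inv_comp_self]
  exact .comp (F.G.src_inv a) (.inv ha) ha

lemma Gen.rng {a : F.B} (ha : Gen F a) : Gen F (F.G.rng a) := by
  rw [← F.G.comp_inv_self]
  exact .comp (F.G.rng_inv a).symm ha (.inv ha)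

noncomputable def genSub : GroupoidStruct {b : F.B // Gen F b} where
  src f := ⟨F.G.src f.1, f.2.src⟩
  rng f := ⟨F.G.rng f.1, f.2.rng⟩
  comp f g := if h : F.G.src f.1 = F.G.rng g.1 then ⟨F.G.comp f.1 g.1, .comp h f.2 g.2⟩ else f
  inv f := ⟨F.G.inv f.1, .inv f.2⟩
  src_src f := Subtype.ext (F.G.src_src f.1)
  rng_src f := Subtype.ext (F.G.rng_src f.1)
  src_rng f := Subtype.ext (F.G.src_rng f.1)
  rng_rng f := Subtype.ext (F.G.rng_rng f.1)
  comp_src_id f := by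
    dsimp only
    rw [dif_pos (F.G.rng_src f.1).symm]
    exact Subtype.ext (F.G.comp_src_id f.1)
  rng_comp_id f := by
    dsimp only
    rw [dif_pos (F.G.src_rng f.1)]
    exact Subtype.ext (F.G.rng_comp_id f.1)
  src_comp f g h := by
    have h' : F.G.src f.1 = F.G.rng g.1 := congrArg Subtype.val h
    rw [dif_pos h']
    exact Subtype.ext (F.G.src_comp f.1 g.1 h')
  rng_comp f g h := by
    have h' : F.G.src f.1 = F.G.rng g.1 := congrArg Subtype.val h
    rw [dif_pos h']
    exact Subtype.ext (F.G.rng_comp f.1 g.1 h')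
  assoc f g h hfg hgh := by
    have h1 : F.G.src f.1 = F.G.rng g.1 := congrArg Subtype.val hfg
    have h2 : F.G.src g.1 = F.G.rng h.1 := congrArg Subtype.val hgh
    rw [dif_pos h1, dif_pos h2, dif_pos, dif_pos]
    · exact Subtype.ext (F.G.assoc f.1 g.1 h.1 h1 h2)
    · rw [h1, F.G.rng_comp g.1 h.1 h2]
    · rw [F.G.src_comp f.1 g.1 h1, h2]
  src_inv f := Subtype.ext (F.G.src_inv f.1)
  rng_inv f := Subtype.ext (F.G.rng_inv f.1)
  inv_comp_self f := by
    dsimp only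
    rw [dif_pos (F.G.src_inv f.1)]
    exact Subtype.ext (F.G.inv_comp_self f.1)
  comp_inv_self f := by
    dsimp only
    rw [dif_pos (F.G.rng_inv f.1).symm]
    exact Subtype.ext (F.G.comp_inv_self f.1)

lemma gen_all (b : F.B) : Gen F b := by
  have hj : IsFunctorToGpdFun S (genSub F) (fun α => ⟨F.i α, .base α⟩) := by
    refine ⟨fun a => Subtype.ext (F.i_hom.1 a), fun a => Subtype.ext (F.i_hom.2.1 a),
      fun a b hab => ?_⟩
    have h' : F.G.src (F.i a) = F.G.rng (F.i b) := by
      rw [← F.i_hom.1, ← F.i_hom.2.1, hab]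
    show _ = dite _ _ _
    rw [dif_pos h']
    exact Subtype.ext (F.i_hom.2.2 a b hab)
  obtain ⟨F0, ⟨hF0, hF0i⟩, -⟩ := F.univ (genSub F) _ hj
  have hval : IsGpdHomFun (genSub F) F.G (fun f => f.1) := by
    refine ⟨fun a => rfl, fun a => rfl, fun a b hab => ?_⟩
    have h' : F.G.src a.1 = F.G.rng b.1 := congrArg Subtype.val hab
    show (dite _ _ _ : {b : F.B // Gen F b}).1 = _
    rw [dif_pos h']
  obtain ⟨I, -, hIuniq⟩ := F.univ F.G F.i F.i_hom
  have h1 := hIuniq (fun b => (F0 b).1) ⟨gpdhom_comp hF0 hval,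
    fun a => by show (F0 (F.i a)).1 = F.i a; rw [hF0i]⟩
  have h2 := hIuniq (fun b => b) ⟨gpdhom_id, fun _ => rfl⟩
  have : (F0 b).1 = b := by
    have := (h1.trans h2.symm)
    exact congrFun this b
  exact this ▸ (F0 b).2

end FG
section Til
variable {k : ℕ} {A A' : Type} (Λ : KGraphStruct k A) (Ω : KGraphStruct k A')
  (FΩ : FundamentalGroupoid Ω) (p : A' → A)

/-- Membership of a vertex `w` of `Ω` in the fiber over the vertex `u` of `Λ`. -/
def Fib (w : A') (u : A) : Prop := Ω.src w = w ∧ p w = u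

/-- A fiber bijection over a pair of vertices of `Λ`, decorated by arrows of the
fundamental groupoid of `Ω` connecting each fiber vertex to its image. -/
structure Til : Type where
  u : A
  u' : A
  σ : A' → A'
  τ : A' → A'
  θ : A' → FΩ.B
  hu : Λ.src u = u
  hu' : Λ.src u' = u'
  hσ : ∀ w, Fib Ω p w u → Fib Ω p (σ w) u'
  hτ : ∀ w, Fib Ω p w u' → Fib Ω p (τ w) u
  hτσ : ∀ w, Fib Ω p w u → τ (σ w) = w
  hστ : ∀ w, Fib Ω p w u' → σ (τ w) = w
  hθs : ∀ w, Fib Ω p w u → FΩ.G.src (θ w) = FΩ.i w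
  hθr : ∀ w, Fib Ω p w u → FΩ.G.rng (θ w) = FΩ.i (σ w)
  hσ0 : ∀ w, ¬ Fib Ω p w u → σ w = w
  hτ0 : ∀ w, ¬ Fib Ω p w u' → τ w = w
  hθ0 : ∀ w, ¬ Fib Ω p w u → θ w = FΩ.i w

variable {Λ Ω FΩ p}

lemma Til.ext'' {f g : Til Λ Ω FΩ p} (h1 : f.u = g.u) (h2 : f.u' = g.u')
    (h3 : f.σ = g.σ) (h4 : f.τ = g.τ) (h5 : f.θ = g.θ) : f = g := by
  cases f; cases g
  dsimp only at h1 h2 h3 h4 h5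
  subst h1; subst h2; subst h3; subst h4; subst h5
  rfl

/-- The identity arrow of the `Til` groupoid at a vertex `u`. -/
def idTil (u : A) (hu : Λ.src u = u) : Til Λ Ω FΩ p where
  u := u
  u' := u
  σ := fun w => w
  τ := fun w => w
  θ := fun w => FΩ.i w
  hu := hu
  hu' := hu
  hσ := fun _ h => h
  hτ := fun _ h => h
  hτσ := fun _ _ => rfl
  hστ := fun _ _ => rfl
  hθs := fun w h => by rw [← FΩ.i_hom.1, h.1]
  hθr := fun w h => by rw [← FΩ.i_hom.2.1]; rw [← h.1]; rw [Ω.rng_src, h.1]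
  hσ0 := fun _ _ => rfl
  hτ0 := fun _ _ => rfl
  hθ0 := fun _ _ => rfl

/-- Guarded composition in the `Til` groupoid. -/
noncomputable def compTil' (f g : Til Λ Ω FΩ p) (h : g.u' = f.u) : Til Λ Ω FΩ p where
  u := g.u
  u' := f.u'
  σ := fun w => if Fib Ω p w g.u then f.σ (g.σ w) else w
  τ := fun w => if Fib Ω p w f.u' then g.τ (f.τ w) else w
  θ := fun w => if Fib Ω p w g.u then FΩ.G.comp (f.θ (g.σ w)) (g.θ w) else FΩ.i w
  hu := g.hu
  hu' := f.hu'
  hσ := fun w hw => by rw [if_pos hw]; exact f.hσ _ (h ▸ g.hσ w hw)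
  hτ := fun w hw => by rw [if_pos hw]; exact g.hτ _ (h ▸ f.hτ w hw)
  hτσ := fun w hw => by
    have h1 : Fib Ω p (g.σ w) f.u := h ▸ g.hσ w hw
    rw [if_pos hw, if_pos (f.hσ _ h1), f.hτσ _ h1, g.hτσ _ hw]
  hστ := fun w hw => by
    have h1 : Fib Ω p (f.τ w) g.u' := h ▸ f.hτ w hw
    rw [if_pos hw, if_pos (g.hτ _ h1), g.hστ _ h1, f.hστ _ hw]
  hθs := fun w hw => by
    have h1 : Fib Ω p (g.σ w) f.u := h ▸ g.hσ w hw
    rw [if_pos hw, FΩ.G.src_comp _ _ (by rw [f.hθs _ h1, g.hθr _ hw]), g.hθs _ hw]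
  hθr := fun w hw => by
    have h1 : Fib Ω p (g.σ w) f.u := h ▸ g.hσ w hw
    rw [if_pos hw, if_pos hw, FΩ.G.rng_comp _ _ (by rw [f.hθs _ h1, g.hθr _ hw]),
      f.hθr _ h1]
  hσ0 := fun w hw => if_neg hw
  hτ0 := fun w hw => if_neg hw
  hθ0 := fun w hw => if_neg hw

/-- Composition in the `Til` groupoid. -/
noncomputable def compTil (f g : Til Λ Ω FΩ p) : Til Λ Ω FΩ p :=
  if h : g.u' = f.u then compTil' f g h else f

lemma compTil_eq {f g : Til Λ Ω FΩ p} (h : g.u' = f.u) :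
    compTil f g = compTil' f g h := dif_pos h

/-- Inversion in the `Til` groupoid. -/
noncomputable def invTil (f : Til Λ Ω FΩ p) : Til Λ Ω FΩ p where
  u := f.u'
  u' := f.u
  σ := f.τ
  τ := f.σ
  θ := fun w => if Fib Ω p w f.u' then FΩ.G.inv (f.θ (f.τ w)) else FΩ.i w
  hu := f.hu'
  hu' := f.hu
  hσ := f.hτ
  hτ := f.hσ
  hτσ := f.hστ
  hστ := f.hτσ
  hθs := fun w hw => by
    rw [if_pos hw, FΩ.G.src_inv, f.hθr _ (f.hτ w hw), f.hστ _ hw]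
  hθr := fun w hw => by
    rw [if_pos hw, FΩ.G.rng_inv, f.hθs _ (f.hτ w hw)]
  hσ0 := f.hτ0
  hτ0 := f.hσ0
  hθ0 := fun w hw => if_neg hw

variable (Λ Ω FΩ p)

/-- The groupoid of decorated fiber bijections. -/
noncomputable def tilGpd : GroupoidStruct (Til Λ Ω FΩ p) where
  src f := idTil f.u f.hu
  rng f := idTil f.u' f.hu'
  comp := compTil
  inv := invTil
  src_src _ := rfl
  rng_src _ := rfl
  src_rng _ := rfl
  rng_rng _ := rfl
  comp_src_id f := by
    rw [compTil_eq (show (idTil f.u f.hu : Til Λ Ω FΩ p).u' = f.u from rfl)]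
    refine Til.ext'' rfl rfl ?_ ?_ ?_ <;> funext w
    · show (if Fib Ω p w f.u then f.σ w else w) = f.σ w
      by_cases hw : Fib Ω p w f.u
      · exact if_pos hw
      · rw [if_neg hw, f.hσ0 w hw]
    · show (if Fib Ω p w f.u' then f.τ w else w) = f.τ w
      by_cases hw : Fib Ω p w f.u'
      · exact if_pos hw
      · rw [if_neg hw, f.hτ0 w hw]
    · by_cases hw : Fib Ω p w f.u
      · show (if Fib Ω p w f.u then FΩ.G.comp (f.θ w) (FΩ.i w) else FΩ.i w) = f.θ w
        rw [if_pos hw, ← f.hθs w hw, FΩ.G.comp_src_id]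
      · show (if Fib Ω p w f.u then FΩ.G.comp (f.θ w) (FΩ.i w) else FΩ.i w) = f.θ w
        rw [if_neg hw, f.hθ0 w hw]
  rng_comp_id f := by
    rw [compTil_eq (show f.u' = (idTil f.u' f.hu' : Til Λ Ω FΩ p).u from rfl)]
    refine Til.ext'' rfl rfl ?_ ?_ ?_ <;> funext w
    · show (if Fib Ω p w f.u then f.σ w else w) = f.σ w
      by_cases hw : Fib Ω p w f.u
      · exact if_pos hw
      · rw [if_neg hw, f.hσ0 w hw]
    · show (if Fib Ω p w f.u' then f.τ w else w) = f.τ w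
      by_cases hw : Fib Ω p w f.u'
      · exact if_pos hw
      · rw [if_neg hw, f.hτ0 w hw]
    · by_cases hw : Fib Ω p w f.u
      · show (if Fib Ω p w f.u then FΩ.G.comp (FΩ.i (f.σ w)) (f.θ w) else FΩ.i w) = f.θ w
        rw [if_pos hw, ← f.hθr w hw, FΩ.G.rng_comp_id]
      · show (if Fib Ω p w f.u then FΩ.G.comp (FΩ.i (f.σ w)) (f.θ w) else FΩ.i w) = f.θ w
        rw [if_neg hw, f.hθ0 w hw]
  src_comp f g h := by
    have h' : g.u' = f.u := (congrArg Til.u h).symm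
    rw [compTil_eq h']
    rfl
  rng_comp f g h := by
    have h' : g.u' = f.u := (congrArg Til.u h).symm
    rw [compTil_eq h']
    rfl
  assoc f g h hfg hgh := by
    have h1 : f.u = g.u' := congrArg Til.u hfg
    have h2 : g.u = h.u' := congrArg Til.u hgh
    rw [compTil_eq h1.symm, compTil_eq h2.symm,
      compTil_eq (show h.u' = (compTil' f g h1.symm).u from h2.symm),
      compTil_eq (show (compTil' g h h2.symm).u' = f.u from h1.symm)]
    refine Til.ext'' rfl rfl ?_ ?_ ?_ <;> funext w
    · show (if Fib Ω p w h.u then (compTil' f g h1.symm).σ (h.σ w) else w) =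
        (if Fib Ω p w h.u then f.σ ((compTil' g h h2.symm).σ w) else w)
      by_cases hw : Fib Ω p w h.u
      · have hσw : Fib Ω p (h.σ w) g.u := h2 ▸ h.hσ w hw
        rw [if_pos hw, if_pos hw]
        show (if Fib Ω p (h.σ w) g.u then f.σ (g.σ (h.σ w)) else h.σ w) =
          f.σ (if Fib Ω p w h.u then g.σ (h.σ w) else w)
        rw [if_pos hσw, if_pos hw]
      · rw [if_neg hw, if_neg hw]
    · show (if Fib Ω p w f.u' then h.τ ((compTil' f g h1.symm).τ w) else w) =
        (if Fib Ω p w f.u' then (compTil' g h h2.symm).τ (f.τ w) else w)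
      by_cases hw : Fib Ω p w f.u'
      · have hτw : Fib Ω p (f.τ w) g.u' := h1 ▸ f.hτ w hw
        rw [if_pos hw, if_pos hw]
        show h.τ (if Fib Ω p w f.u' then g.τ (f.τ w) else w) =
          (if Fib Ω p (f.τ w) g.u' then h.τ (g.τ (f.τ w)) else f.τ w)
        rw [if_pos hw, if_pos hτw]
      · rw [if_neg hw, if_neg hw]
    · show (if Fib Ω p w h.u then
          FΩ.G.comp ((compTil' f g h1.symm).θ (h.σ w)) (h.θ w) else FΩ.i w) =
        (if Fib Ω p w h.u then
          FΩ.G.comp (f.θ ((compTil' g h h2.symm).σ w)) ((compTil' g h h2.symm).θ w)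
          else FΩ.i w)
      by_cases hw : Fib Ω p w h.u
      · have hσw : Fib Ω p (h.σ w) g.u := h2 ▸ h.hσ w hw
        have hσσw : Fib Ω p (g.σ (h.σ w)) f.u := h1 ▸ g.hσ _ hσw
        rw [if_pos hw, if_pos hw]
        show FΩ.G.comp
            (if Fib Ω p (h.σ w) g.u then FΩ.G.comp (f.θ (g.σ (h.σ w))) (g.θ (h.σ w))
              else FΩ.i (h.σ w)) (h.θ w) =
          FΩ.G.comp (f.θ (if Fib Ω p w h.u then g.σ (h.σ w) else w))
            (if Fib Ω p w h.u then FΩ.G.comp (g.θ (h.σ w)) (h.θ w) else FΩ.i w)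
        rw [if_pos hσw, if_pos hw, if_pos hw]
        exact FΩ.G.assoc _ _ _ (by rw [f.hθs _ hσσw, g.hθr _ hσw])
          (by rw [g.hθs _ hσw, h.hθr _ hw])
      · rw [if_neg hw, if_neg hw]
  src_inv _ := rfl
  rng_inv _ := rfl
  inv_comp_self f := by
    rw [compTil_eq (show f.u' = (invTil f).u from rfl)]
    refine Til.ext'' rfl rfl ?_ ?_ ?_ <;> funext w
    · show (if Fib Ω p w f.u then f.τ (f.σ w) else w) = w
      by_cases hw : Fib Ω p w f.u
      · rw [if_pos hw, f.hτσ _ hw]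
      · exact if_neg hw
    · show (if Fib Ω p w f.u then f.τ (f.σ w) else w) = w
      by_cases hw : Fib Ω p w f.u
      · rw [if_pos hw, f.hτσ _ hw]
      · exact if_neg hw
    · show (if Fib Ω p w f.u then FΩ.G.comp ((invTil f).θ (f.σ w)) (f.θ w) else FΩ.i w)
        = FΩ.i w
      by_cases hw : Fib Ω p w f.u
      · rw [if_pos hw]
        show FΩ.G.comp
          (if Fib Ω p (f.σ w) f.u' then FΩ.G.inv (f.θ (f.τ (f.σ w))) else FΩ.i (f.σ w))
          (f.θ w) = FΩ.i w
        rw [if_pos (f.hσ w hw), f.hτσ _ hw, FΩ.G.inv_comp_self, f.hθs _ hw]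
      · exact if_neg hw
  comp_inv_self f := by
    rw [compTil_eq (show (invTil f).u' = f.u from rfl)]
    refine Til.ext'' rfl rfl ?_ ?_ ?_ <;> funext w
    · show (if Fib Ω p w f.u' then f.σ (f.τ w) else w) = w
      by_cases hw : Fib Ω p w f.u'
      · rw [if_pos hw, f.hστ _ hw]
      · exact if_neg hw
    · show (if Fib Ω p w f.u' then f.σ (f.τ w) else w) = w
      by_cases hw : Fib Ω p w f.u'
      · rw [if_pos hw, f.hστ _ hw]
      · exact if_neg hw
    · show (if Fib Ω p w f.u' then FΩ.G.comp (f.θ (f.τ w)) ((invTil f).θ w) else FΩ.i w)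
        = FΩ.i w
      by_cases hw : Fib Ω p w f.u'
      · rw [if_pos hw]
        show FΩ.G.comp (f.θ (f.τ w))
          (if Fib Ω p w f.u' then FΩ.G.inv (f.θ (f.τ w)) else FΩ.i w) = FΩ.i w
        rw [if_pos hw, FΩ.G.comp_inv_self, f.hθr _ (f.hτ w hw), f.hστ _ hw]
      · exact if_neg hw

end Til

section Phi
variable {k : ℕ} {A A' : Type} {Λ : KGraphStruct k A} {Ω : KGraphStruct k A'}
  (FΩ : FundamentalGroupoid Ω) {p : A' → A} (hp : IsCovering Ω Λ p)

/-- The unique lift of `α` with source `w`. -/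
noncomputable def lft (α : A) (w : A') (h : Fib Ω p w (Λ.src α)) : A' :=
  (hp.src_lift w h.1 α h.2.symm).choose

lemma lft_src (α : A) (w : A') (h : Fib Ω p w (Λ.src α)) :
    Ω.src (lft hp α w h) = w := (hp.src_lift w h.1 α h.2.symm).choose_spec.1

lemma lft_p (α : A) (w : A') (h : Fib Ω p w (Λ.src α)) :
    p (lft hp α w h) = α := (hp.src_lift w h.1 α h.2.symm).choose_spec.2

lemma lft_uniq {α : A} {w : A'} (h : Fib Ω p w (Λ.src α)) {lam : A'}
    (h1 : Ω.src lam = w) (h2 : p lam = α) : lam = lft hp α w h :=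
  hp.src_inj _ _ (by rw [h1, lft_src hp α w h]) (by rw [h2, lft_p hp α w h])

/-- The unique lift of `α` with range `w`. -/
noncomputable def rlft (α : A) (w : A') (h : Fib Ω p w (Λ.rng α)) : A' :=
  (hp.rng_lift w h.1 α h.2.symm).choose

lemma rlft_rng (α : A) (w : A') (h : Fib Ω p w (Λ.rng α)) :
    Ω.rng (rlft hp α w h) = w := (hp.rng_lift w h.1 α h.2.symm).choose_spec.1

lemma rlft_p (α : A) (w : A') (h : Fib Ω p w (Λ.rng α)) :
    p (rlft hp α w h) = α := (hp.rng_lift w h.1 α h.2.symm).choose_spec.2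

lemma rlft_uniq {α : A} {w : A'} (h : Fib Ω p w (Λ.rng α)) {lam : A'}
    (h1 : Ω.rng lam = w) (h2 : p lam = α) : lam = rlft hp α w h :=
  hp.rng_inj _ _ (by rw [h1, rlft_rng hp α w h]) (by rw [h2, rlft_p hp α w h])

/-- The canonical functor from `Λ` to the groupoid of decorated fiber
bijections of a covering. -/
noncomputable def Phi (α : A) : Til Λ Ω FΩ p where
  u := Λ.src α
  u' := Λ.rng α
  σ := fun w => if h : Fib Ω p w (Λ.src α) then Ω.rng (lft hp α w h) else w
  τ := fun w => if h : Fib Ω p w (Λ.rng α) then Ω.src (rlft hp α w h) else w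
  θ := fun w => if h : Fib Ω p w (Λ.src α) then FΩ.i (lft hp α w h) else FΩ.i w
  hu := Λ.src_src α
  hu' := Λ.src_rng α
  hσ := fun w hw => by
    rw [dif_pos hw]
    exact ⟨Ω.src_rng _, by rw [hp.hom.2.1, lft_p hp α w hw]⟩
  hτ := fun w hw => by
    rw [dif_pos hw]
    exact ⟨Ω.src_src _, by rw [hp.hom.1, rlft_p hp α w hw]⟩
  hτσ := fun w hw => by
    rw [dif_pos hw]
    have h1 : Fib Ω p (Ω.rng (lft hp α w hw)) (Λ.rng α) :=
      ⟨Ω.src_rng _, by rw [hp.hom.2.1, lft_p hp α w hw]⟩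
    rw [dif_pos h1, ← rlft_uniq hp h1 rfl (lft_p hp α w hw), lft_src hp α w hw]
  hστ := fun w hw => by
    rw [dif_pos hw]
    have h1 : Fib Ω p (Ω.src (rlft hp α w hw)) (Λ.src α) :=
      ⟨Ω.src_src _, by rw [hp.hom.1, rlft_p hp α w hw]⟩
    rw [dif_pos h1, ← lft_uniq hp h1 rfl (rlft_p hp α w hw), rlft_rng hp α w hw]
  hθs := fun w hw => by rw [dif_pos hw, ← FΩ.i_hom.1, lft_src hp α w hw]
  hθr := fun w hw => by rw [dif_pos hw, dif_pos hw, ← FΩ.i_hom.2.1]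
  hσ0 := fun w hw => dif_neg hw
  hτ0 := fun w hw => dif_neg hw
  hθ0 := fun w hw => dif_neg hw

lemma Phi_vertex {v : A} (hv : Λ.src v = v) :
    Phi FΩ hp v = (idTil v hv : Til Λ Ω FΩ p) := by
  have hv' : Λ.rng v = v := by
    conv_lhs => rw [← hv]
    rw [Λ.rng_src, hv]
  refine Til.ext'' hv hv' ?_ ?_ ?_ <;> funext w
  · show (if h : Fib Ω p w (Λ.src v) then Ω.rng (lft hp v w h) else w) = w
    by_cases h : Fib Ω p w (Λ.src v)
    · rw [dif_pos h, ← lft_uniq hp h h.1 (by rw [h.2, hv]), ← h.1, Ω.rng_src, h.1]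
    · exact dif_neg h
  · show (if h : Fib Ω p w (Λ.rng v) then Ω.src (rlft hp v w h) else w) = w
    by_cases h : Fib Ω p w (Λ.rng v)
    · have hrw : Ω.rng w = w := by rw [← h.1, Ω.rng_src, h.1]
      rw [dif_pos h, ← rlft_uniq hp h hrw (by rw [h.2, hv']), h.1]
    · exact dif_neg h
  · show (if h : Fib Ω p w (Λ.src v) then FΩ.i (lft hp v w h) else FΩ.i w) = FΩ.i w
    by_cases h : Fib Ω p w (Λ.src v)
    · rw [dif_pos h, ← lft_uniq hp h h.1 (by rw [h.2, hv])]
    · exact dif_neg h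

lemma Phi_comp {α β : A} (hg : Λ.src α = Λ.rng β) :
    Phi FΩ hp (Λ.comp α β) = compTil (Phi FΩ hp α) (Phi FΩ hp β) := by
  have hguard : (Phi FΩ hp β).u' = (Phi FΩ hp α).u := hg.symm
  rw [compTil_eq hguard]
  have hsc : Λ.src (Λ.comp α β) = Λ.src β := Λ.src_comp α β hg
  have hrc : Λ.rng (Λ.comp α β) = Λ.rng α := Λ.rng_comp α β hg
  -- key: decomposition of lifts
  have keyσ : ∀ w (hw : Fib Ω p w (Λ.src β)) (hw' : Fib Ω p w (Λ.src (Λ.comp α β))),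
      ∀ (h1 : Fib Ω p (Ω.rng (lft hp β w hw)) (Λ.src α)),
      lft hp (Λ.comp α β) w hw' =
        Ω.comp (lft hp α (Ω.rng (lft hp β w hw)) h1) (lft hp β w hw) := by
    intro w hw hw' h1
    have hsrcs : Ω.src (lft hp α _ h1) = Ω.rng (lft hp β w hw) := lft_src hp α _ h1
    refine (lft_uniq hp hw' ?_ ?_).symm
    · rw [Ω.src_comp _ _ hsrcs, lft_src hp β w hw]
    · rw [hp.hom.2.2.1 _ _ hsrcs, lft_p hp α _ h1, lft_p hp β w hw]
  have keyτ : ∀ w (hw : Fib Ω p w (Λ.rng α)) (hw' : Fib Ω p w (Λ.rng (Λ.comp α β)))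
      (h1 : Fib Ω p (Ω.src (rlft hp α w hw)) (Λ.rng β)),
      rlft hp (Λ.comp α β) w hw' =
        Ω.comp (rlft hp α w hw) (rlft hp β (Ω.src (rlft hp α w hw)) h1) := by
    intro w hw hw' h1
    have hsrcs : Ω.src (rlft hp α w hw) = Ω.rng (rlft hp β _ h1) := (rlft_rng hp β _ h1).symm
    refine (rlft_uniq hp hw' ?_ ?_).symm
    · rw [Ω.rng_comp _ _ hsrcs, rlft_rng hp α w hw]
    · rw [hp.hom.2.2.1 _ _ hsrcs, rlft_p hp α w hw, rlft_p hp β _ h1]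
  refine Til.ext'' hsc hrc ?_ ?_ ?_ <;> funext w
  · show (if h : Fib Ω p w (Λ.src (Λ.comp α β)) then Ω.rng (lft hp (Λ.comp α β) w h) else w)
      = if Fib Ω p w (Λ.src β) then (Phi FΩ hp α).σ ((Phi FΩ hp β).σ w) else w
    by_cases hw : Fib Ω p w (Λ.src β)
    · have hw' : Fib Ω p w (Λ.src (Λ.comp α β)) := by rwa [hsc]
      have h1 : Fib Ω p (Ω.rng (lft hp β w hw)) (Λ.src α) :=
        ⟨Ω.src_rng _, by rw [hp.hom.2.1, lft_p hp β w hw, ← hg]⟩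
      rw [dif_pos hw', if_pos hw]
      show Ω.rng (lft hp (Λ.comp α β) w hw') = (Phi FΩ hp α).σ
        (if h : Fib Ω p w (Λ.src β) then Ω.rng (lft hp β w h) else w)
      rw [dif_pos hw]
      show _ = (if h : Fib Ω p (Ω.rng (lft hp β w hw)) (Λ.src α) then
        Ω.rng (lft hp α _ h) else _)
      rw [dif_pos h1, keyσ w hw hw' h1,
        Ω.rng_comp _ _ (by rw [lft_src hp α _ h1])]
    · have hw' : ¬ Fib Ω p w (Λ.src (Λ.comp α β)) := by rwa [hsc]
      rw [dif_neg hw', if_neg hw]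
  · show (if h : Fib Ω p w (Λ.rng (Λ.comp α β)) then Ω.src (rlft hp (Λ.comp α β) w h) else w)
      = if Fib Ω p w (Λ.rng α) then (Phi FΩ hp β).τ ((Phi FΩ hp α).τ w) else w
    by_cases hw : Fib Ω p w (Λ.rng α)
    · have hw' : Fib Ω p w (Λ.rng (Λ.comp α β)) := by rwa [hrc]
      have h1 : Fib Ω p (Ω.src (rlft hp α w hw)) (Λ.rng β) :=
        ⟨Ω.src_src _, by rw [hp.hom.1, rlft_p hp α w hw, hg]⟩
      rw [dif_pos hw', if_pos hw]
      show Ω.src (rlft hp (Λ.comp α β) w hw') = (Phi FΩ hp β).τ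
        (if h : Fib Ω p w (Λ.rng α) then Ω.src (rlft hp α w h) else w)
      rw [dif_pos hw]
      show _ = (if h : Fib Ω p (Ω.src (rlft hp α w hw)) (Λ.rng β) then
        Ω.src (rlft hp β _ h) else _)
      rw [dif_pos h1, keyτ w hw hw' h1,
        Ω.src_comp _ _ (rlft_rng hp β _ h1).symm]
    · have hw' : ¬ Fib Ω p w (Λ.rng (Λ.comp α β)) := by rwa [hrc]
      rw [dif_neg hw', if_neg hw]
  · show (if h : Fib Ω p w (Λ.src (Λ.comp α β)) then FΩ.i (lft hp (Λ.comp α β) w h) else FΩ.i w)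
      = if Fib Ω p w (Λ.src β) then
          FΩ.G.comp ((Phi FΩ hp α).θ ((Phi FΩ hp β).σ w)) ((Phi FΩ hp β).θ w)
        else FΩ.i w
    by_cases hw : Fib Ω p w (Λ.src β)
    · have hw' : Fib Ω p w (Λ.src (Λ.comp α β)) := by rwa [hsc]
      have h1 : Fib Ω p (Ω.rng (lft hp β w hw)) (Λ.src α) :=
        ⟨Ω.src_rng _, by rw [hp.hom.2.1, lft_p hp β w hw, ← hg]⟩
      rw [dif_pos hw', if_pos hw]
      show FΩ.i (lft hp (Λ.comp α β) w hw') = FΩ.G.comp ((Phi FΩ hp α).θ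
        ((if h : Fib Ω p w (Λ.src β) then Ω.rng (lft hp β w h) else w)))
        (if h : Fib Ω p w (Λ.src β) then FΩ.i (lft hp β w h) else FΩ.i w)
      rw [dif_pos hw, dif_pos hw]
      show _ = FΩ.G.comp (if h : Fib Ω p (Ω.rng (lft hp β w hw)) (Λ.src α) then
        FΩ.i (lft hp α _ h) else _) _
      rw [dif_pos h1, keyσ w hw hw' h1, FΩ.i_hom.2.2 _ _ (by rw [lft_src hp α _ h1])]
    · have hw' : ¬ Fib Ω p w (Λ.src (Λ.comp α β)) := by rwa [hsc]
      rw [dif_neg hw', if_neg hw]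

lemma Phi_functor : IsFunctorToGpdFun Λ (tilGpd Λ Ω FΩ p) (Phi FΩ hp) := by
  refine ⟨fun α => ?_, fun α => ?_, fun α β hg => Phi_comp FΩ hp hg⟩
  · rw [Phi_vertex FΩ hp (Λ.src_src α)]
    rfl
  · rw [Phi_vertex FΩ hp (Λ.src_rng α)]
    rfl

end Phi

/-- For a covering `p : Ω → Λ`, `x ∈ Λ⁰` and `v ∈ p⁻¹(x)`,
the induced functor `p₊` maps the fundamental group `π(Ω,v)` isomorphically
onto the stability group `S_v = {a ∈ π(Λ,x) : a·v = v}` of the corresponding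
action of `𝒢(Λ)` on `Ω⁰`: it is injective on `π(Ω,v)` and its image is
exactly `S_v`. -/
theorem pstar_iso_onto_stability {k : ℕ} {A A' : Type}
    (Λ : KGraphStruct k A) (Ω : KGraphStruct k A')
    (FΛ : FundamentalGroupoid Λ) (FΩ : FundamentalGroupoid Ω)
    (p : A' → A) (hp : IsCovering Ω Λ p)
    (pst : FΩ.B → FΛ.B) (hpst : IsGpdHomFun FΩ.G FΛ.G pst)
    (hpsti : ∀ a, pst (FΩ.i a) = FΛ.i (p a))
    (act : FΛ.B → A' → A') (hact : CorrespondingAction Ω Λ FΛ p act)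
    (x : A) (hx : Λ.IsVertex x) (v : A') (hv : Ω.IsVertex v) (hpv : p v = x) :
    (∀ c ∈ FΩ.pi1 v, ∀ c' ∈ FΩ.pi1 v, pst c = pst c' → c = c') ∧
    pst '' FΩ.pi1 v =
      {a | FΛ.G.src a = FΛ.i x ∧ FΛ.G.rng a = FΛ.i x ∧ act a v = v} := by
  classical
  obtain ⟨Φ', ⟨hΦ'hom, hΦ'i⟩, -⟩ :=
    FΛ.univ (tilGpd Λ Ω FΩ p) (Phi FΩ hp) (Phi_functor FΩ hp)
  have pw_vertex : ∀ {w : A'}, Ω.IsVertex w → Λ.IsVertex (p w) := by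
    intro w hw
    show Λ.src (p w) = p w
    rw [← hp.hom.1 w, hw]
  have srcU : ∀ a : FΛ.B, FΛ.G.src a = FΛ.i ((Φ' a).u) := by
    intro a
    obtain ⟨va, ⟨hva1, hva2⟩, -⟩ := FΛ.obj_bij (FΛ.G.src a) (FΛ.G.src_src a)
    have h1 : Φ' (FΛ.G.src a) = idTil (Φ' a).u (Φ' a).hu := hΦ'hom.1 a
    have h2 : Φ' (FΛ.G.src a) = idTil va hva1 := by
      rw [← hva2, hΦ'i va, Phi_vertex FΩ hp hva1]
    have h3 : (Φ' a).u = va := congrArg Til.u (h1.symm.trans h2)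
    rw [← hva2, h3]
  have rngU : ∀ a : FΛ.B, FΛ.G.rng a = FΛ.i ((Φ' a).u') := by
    intro a
    obtain ⟨va, ⟨hva1, hva2⟩, -⟩ := FΛ.obj_bij (FΛ.G.rng a) (FΛ.G.src_rng a)
    have h1 : Φ' (FΛ.G.rng a) = idTil (Φ' a).u' (Φ' a).hu' := hΦ'hom.2.1 a
    have h2 : Φ' (FΛ.G.rng a) = idTil va hva1 := by
      rw [← hva2, hΦ'i va, Phi_vertex FΩ hp hva1]
    have h3 : (Φ' a).u' = va := congrArg Til.u (h1.symm.trans h2)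
    rw [← hva2, h3]
  have fibsrc : ∀ (c : FΩ.B) {w : A'}, Ω.IsVertex w → FΩ.G.src c = FΩ.i w →
      Fib Ω p w ((Φ' (pst c)).u) := by
    intro c w hw hcw
    refine ⟨hw, i_inj FΛ (pw_vertex hw) (Φ' (pst c)).hu ?_⟩
    rw [← hpsti w, ← hcw, hpst.1, srcU (pst c)]
  have fibrng : ∀ (c : FΩ.B) {w : A'}, Ω.IsVertex w → FΩ.G.rng c = FΩ.i w →
      Fib Ω p w ((Φ' (pst c)).u') := by
    intro c w hw hcw
    refine ⟨hw, i_inj FΛ (pw_vertex hw) (Φ' (pst c)).hu' ?_⟩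
    rw [← hpsti w, ← hcw, hpst.2.1, rngU (pst c)]
  have main : ∀ c : FΩ.B, ∀ w, Ω.IsVertex w → FΩ.G.src c = FΩ.i w →
      (Φ' (pst c)).θ w = c := by
    intro c
    induction gen_all FΩ c with
    | base lam =>
      intro w hw hcw
      have hwl : Ω.src lam = w :=
        i_inj FΩ (Ω.src_src lam) hw (by rw [FΩ.i_hom.1 lam]; exact hcw)
      rw [hpsti lam, hΦ'i (p lam)]
      have hfib : Fib Ω p w (Λ.src (p lam)) := ⟨hw, by rw [← hwl]; exact hp.hom.1 lam⟩
      show (if h : Fib Ω p w (Λ.src (p lam)) then FΩ.i (lft hp (p lam) w h) else FΩ.i w)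
        = FΩ.i lam
      rw [dif_pos hfib, ← lft_uniq hp hfib hwl rfl]
    | @comp c1 c2 hguard hga hgb iha ihb =>
      intro w hw hcw
      have hsrc2 : FΩ.G.src c2 = FΩ.i w := by
        rw [← FΩ.G.src_comp c1 c2 hguard]; exact hcw
      have hb2 := ihb w hw hsrc2
      have hfib2 : Fib Ω p w ((Φ' (pst c2)).u) := fibsrc c2 hw hsrc2
      have hw2 : Ω.IsVertex ((Φ' (pst c2)).σ w) := ((Φ' (pst c2)).hσ w hfib2).1
      have hsrc1 : FΩ.G.src c1 = FΩ.i ((Φ' (pst c2)).σ w) := by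
        rw [hguard, ← (Φ' (pst c2)).hθr w hfib2, hb2]
      have ha1 := iha _ hw2 hsrc1
      have hΛguard : FΛ.G.src (pst c1) = FΛ.G.rng (pst c2) := by
        rw [← hpst.1, ← hpst.2.1, hguard]
      have hTguard : (Φ' (pst c2)).u' = (Φ' (pst c1)).u :=
        i_inj FΛ (Φ' (pst c2)).hu' (Φ' (pst c1)).hu (by rw [← rngU, ← srcU, hΛguard])
      have hΦcomp : Φ' (pst (FΩ.G.comp c1 c2)) =
          compTil' (Φ' (pst c1)) (Φ' (pst c2)) hTguard := by
        rw [hpst.2.2 c1 c2 hguard, hΦ'hom.2.2 _ _ hΛguard]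
        show compTil _ _ = _
        exact compTil_eq hTguard
      rw [hΦcomp]
      show (if Fib Ω p w ((Φ' (pst c2)).u) then
          FΩ.G.comp ((Φ' (pst c1)).θ ((Φ' (pst c2)).σ w)) ((Φ' (pst c2)).θ w)
        else FΩ.i w) = FΩ.G.comp c1 c2
      rw [if_pos hfib2, ha1, hb2]
    | @inv b hgb ih =>
      intro w hw hcw
      have hrngb : FΩ.G.rng b = FΩ.i w := by rw [← FΩ.G.src_inv b]; exact hcw
      obtain ⟨wb, ⟨hwb1, hwb2⟩, -⟩ := FΩ.obj_bij (FΩ.G.src b) (FΩ.G.src_src b)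
      have ihb := ih wb hwb1 hwb2.symm
      have hfibwb : Fib Ω p wb ((Φ' (pst b)).u) := fibsrc b hwb1 hwb2.symm
      have hfibw : Fib Ω p w ((Φ' (pst b)).u') := fibrng b hw hrngb
      have hσwb : (Φ' (pst b)).σ wb = w :=
        i_inj FΩ ((Φ' (pst b)).hσ wb hfibwb).1 hw
          (by rw [← (Φ' (pst b)).hθr wb hfibwb, ihb, hrngb])
      have hτw : (Φ' (pst b)).τ w = wb := by
        rw [← hσwb, (Φ' (pst b)).hτσ wb hfibwb]
      have hΦinv : Φ' (pst (FΩ.G.inv b)) = invTil (Φ' (pst b)) := by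
        rw [gpdhom_inv hpst b, gpdhom_inv hΦ'hom (pst b)]
        rfl
      rw [hΦinv]
      show (if Fib Ω p w ((Φ' (pst b)).u') then
          FΩ.G.inv ((Φ' (pst b)).θ ((Φ' (pst b)).τ w)) else FΩ.i w) = FΩ.G.inv b
      rw [if_pos hfibw, hτw, ihb]
  have liftL : ∀ a : FΛ.B, ∀ w, Ω.IsVertex w → FΛ.G.src a = FΛ.i (p w) →
      ∃ c, FΩ.G.src c = FΩ.i w ∧ FΩ.G.rng c = FΩ.i (act a w) ∧ pst c = a := by
    intro a
    induction gen_all FΛ a with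
    | base α =>
      intro w hw hsw
      have hα : Λ.src α = p w :=
        i_inj FΛ (Λ.src_src α) (pw_vertex hw) (by rw [FΛ.i_hom.1 α]; exact hsw)
      obtain ⟨lam, hl1, hl2⟩ := hp.src_lift w hw α hα
      refine ⟨FΩ.i lam, ?_, ?_, ?_⟩
      · rw [← FΩ.i_hom.1, hl1]
      · rw [← FΩ.i_hom.2.1]
        congr 1
        rw [← hact.act_cov lam, hl2, hl1]
      · rw [hpsti, hl2]
    | @comp a1 a2 hguard hga hgb ih1 ih2 =>
      intro w hw hsw
      have hsw2 : FΛ.G.src a2 = FΛ.i (p w) := by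
        rw [← FΛ.G.src_comp a1 a2 hguard]; exact hsw
      obtain ⟨c2, h2s, h2r, h2p⟩ := ih2 w hw hsw2
      obtain ⟨hw2v, hw2f⟩ := hact.act_vertex a2 w hw hsw2
      have hsw1 : FΛ.G.src a1 = FΛ.i (p (act a2 w)) := by rw [hguard, ← hw2f]
      obtain ⟨c1, h1s, h1r, h1p⟩ := ih1 (act a2 w) hw2v hsw1
      have hcg : FΩ.G.src c1 = FΩ.G.rng c2 := by rw [h1s, h2r]
      refine ⟨FΩ.G.comp c1 c2, ?_, ?_, ?_⟩
      · rw [FΩ.G.src_comp _ _ hcg, h2s]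
      · rw [FΩ.G.rng_comp _ _ hcg, h1r, hact.act_comp a1 a2 w hw hsw2 hguard]
      · rw [hpst.2.2 _ _ hcg, h1p, h2p]
    | @inv b hgb ih =>
      intro w hw hsw
      have hrb : FΛ.G.rng b = FΛ.i (p w) := by rw [← FΛ.G.src_inv b]; exact hsw
      obtain ⟨hw0v, hw0f⟩ := hact.act_vertex (FΛ.G.inv b) w hw hsw
      have hsb : FΛ.G.src b = FΛ.i (p (act (FΛ.G.inv b) w)) := by
        rw [hw0f, FΛ.G.rng_inv]
      obtain ⟨c', hcs, hcr, hcp⟩ := ih (act (FΛ.G.inv b) w) hw0v hsb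
      have hbw0 : act b (act (FΛ.G.inv b) w) = w := by
        rw [← hact.act_comp b (FΛ.G.inv b) w hw hsw (FΛ.G.rng_inv b).symm,
          FΛ.G.comp_inv_self, hrb, hact.act_id w hw]
      refine ⟨FΩ.G.inv c', ?_, ?_, ?_⟩
      · rw [FΩ.G.src_inv, hcr, hbw0]
      · rw [FΩ.G.rng_inv, hcs]
      · rw [gpdhom_inv hpst, hcp]
  constructor
  · rintro c ⟨hcs, hcr⟩ c' ⟨hc's, hc'r⟩ hcc
    rw [← main c v hv hcs, ← main c' v hv hc's, hcc]
  · refine Set.Subset.antisymm ?_ ?_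
    · rintro a ⟨c, ⟨hcs, hcr⟩, rfl⟩
      have hsx : FΛ.G.src (pst c) = FΛ.i (p v) := by rw [← hpst.1, hcs, hpsti]
      refine ⟨by rw [hsx, hpv], by rw [← hpst.2.1, hcr, hpsti, hpv], ?_⟩
      obtain ⟨c0, h0s, h0r, h0p⟩ := liftL (pst c) v hv hsx
      have hc0 : c0 = c := by rw [← main c0 v hv h0s, h0p, main c v hv hcs]
      rw [hc0] at h0r
      exact
        i_inj FΩ (hact.act_vertex (pst c) v hv hsx).1 hv (by rw [← h0r, hcr])
    · rintro a ⟨has, har, hav⟩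
      obtain ⟨c, hcs, hcr, hcp⟩ := liftL a v hv (by rw [has, hpv])
      exact ⟨c, ⟨hcs, by rw [hcr, hav]⟩, hcp⟩

end KGraphCovering
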